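/- Let f_1 : R^D -> R be convex and differentiable, f_2 : R^D -> R arbitrary, f = f_1 + f_2, and f_hat(y, z) = f_1(z) + <grad f_1(z), y - z> + f_2(y). Suppose a sequence (y^(k)) satisfies y^(k) in argmax_y f_hat(y, y^(k-1)) for every k. Then f(y^(k)) >= f(y^(k-1)) for all k; and if moreover f is bounded above (for instance f <= 0, as for a log-likelihood), then the sequence of values (f(y^(k))) converges. -/

import Mathlib

open scoped RealInnerProductSpace

private lemma grad_ineq {D : ℕ} (f₁ : EuclideanSpace ℝ (Fin D) → ℝ)
    (hconv : ConvexOn ℝ Set.univ f₁) (hdiff : Differentiable ℝ f₁)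
    (x v : EuclideanSpace ℝ (Fin D)) :
    ⟪gradient f₁ x, v - x⟫ ≤ f₁ v - f₁ x := by
  set g : ℝ → ℝ := fun t => f₁ (AffineMap.lineMap x v t) with hg
  have hgconv : ConvexOn ℝ Set.univ g := by
    have := hconv.comp_affineMap (AffineMap.lineMap x v)
    exact this
  have hline : ∀ t : ℝ, HasDerivAt (fun t : ℝ => AffineMap.lineMap x v t) (v - x) t := by
    intro t
    simpa [AffineMap.lineMap_apply] using
      (((hasDerivAt_id t).smul_const (v - x)).add_const x)
  have hgd : HasDerivAt g ⟪gradient f₁ x, v - x⟫ 0 := by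
    have hF : HasFDerivAt f₁ ((InnerProductSpace.toDual ℝ _) (gradient f₁ x)) x :=
      (hdiff x).hasGradientAt.hasFDerivAt
    rw [show x = AffineMap.lineMap x v (0 : ℝ) by simp] at hF
    have := hF.comp_hasDerivAt 0 (hline 0)
    simp at this ⊢
    exact this
  have hslope := hgconv.le_slope_of_hasDerivAt (Set.mem_univ 0) (Set.mem_univ 1) one_pos hgd
  have hs : slope g 0 1 = f₁ v - f₁ x := by
    simp [slope, hg, AffineMap.lineMap_apply]
  linarith [hslope.trans_eq hs]

/-- Let `f₁ : ℝ^D → ℝ` be convex and differentiable,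
`f₂ : ℝ^D → ℝ` arbitrary, `f = f₁ + f₂`, and let
`f̂(y, z) = f₁(z) + ⟨∇f₁(z), y − z⟩ + f₂(y)` be the CCCP surrogate.  If a
sequence `(y k)` satisfies `y (k+1) ∈ argmax_y f̂(y, y k)` for every `k`, then
`f (y k)` is nondecreasing in `k`; and if moreover `f` is bounded above along
any sequence (e.g. `f ≤ 0`), the sequence of values `f (y k)` converges. -/
theorem cccp_iterates_monotone_and_converge {D : ℕ}
    (f₁ f₂ : EuclideanSpace ℝ (Fin D) → ℝ)
    (hconv : ConvexOn ℝ Set.univ f₁)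
    (hdiff : Differentiable ℝ f₁)
    (y : ℕ → EuclideanSpace ℝ (Fin D))
    (hargmax : ∀ k, ∀ z : EuclideanSpace ℝ (Fin D),
      f₁ (y k) + ⟪gradient f₁ (y k), z - y k⟫ + f₂ z ≤
        f₁ (y k) + ⟪gradient f₁ (y k), y (k + 1) - y k⟫ + f₂ (y (k + 1))) :
    (∀ k, f₁ (y k) + f₂ (y k) ≤ f₁ (y (k + 1)) + f₂ (y (k + 1))) ∧
    ((∃ C, ∀ k, f₁ (y k) + f₂ (y k) ≤ C) →
      ∃ L, Filter.Tendsto (fun k => f₁ (y k) + f₂ (y k))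
        Filter.atTop (nhds L)) := by
  have hmono : ∀ k, f₁ (y k) + f₂ (y k) ≤ f₁ (y (k + 1)) + f₂ (y (k + 1)) := by
    intro k
    have h1 := hargmax k (y k)
    rw [sub_self] at h1
    simp only [inner_zero_right, add_zero] at h1
    have h2 := grad_ineq f₁ hconv hdiff (y k) (y (k + 1))
    linarith
  refine ⟨hmono, fun ⟨C, hC⟩ => ?_⟩
  have hm : Monotone fun k => f₁ (y k) + f₂ (y k) :=
    monotone_nat_of_le_succ hmono
  exact ⟨_, tendsto_atTop_ciSup hm ⟨C, Set.forall_mem_range.2 hC⟩⟩
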